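/- Let f : [0,1] → [0,∞) be a continuous excursion function such that for infinitely many n ∈ ℕ there exists an interval [s,t] ⊆ [0,1] with s < t satisfying sup_{u∈[0,1]} |f(s + (t−s)u) − f(s) − √(t−s)·F_n(u)| < √(t−s)·2^{1−n}. Then the continuum tree T_f = ([0,1]/≈_f, d_f) is starry; in particular T_f has infinite Assouad dimension and is not doubling. -/

import Mathlib

open Set

/-- The continuum-tree distance associated to an excursion function `f`. -/
noncomputable def treeDist (f : ℝ → ℝ) (x y : ℝ) : ℝ :=
  f x + f y - 2 * sInf (f '' Set.Icc (min x y) (max x y))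

/-- The continuum-tree distance restricted to `[0,1]`; the continuum tree `T_f` is the
quotient metric space of `([0,1], dIcc f)` by identifying points at distance `0`. -/
noncomputable def dIcc (f : ℝ → ℝ) (a b : Set.Icc (0 : ℝ) 1) : ℝ :=
  treeDist f a b

/-- The zig-zag function `F_n`. -/
noncomputable def zigzag (n : ℕ) (x : ℝ) : ℝ :=
  if x < 1 / (2 * n) then 2 * n * x
  else if (2 * n - 1) / (2 * n) ≤ x then -2 * n * x + 2 * n
  else if ⌊2 * (n : ℝ) * x⌋ % 2 = 1 then
    -(n : ℝ) * x + (2 * (((⌊2 * (n : ℝ) * x⌋ - 1) / 2 : ℤ) : ℝ) + 3) / 2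
  else (n : ℝ) * x - ((⌊2 * (n : ℝ) * x⌋ / 2 - 1 : ℤ) : ℝ) - 1 / 2

/-- A pseudometric-like distance function `d` admits an `(A,η)`-approximate `n`-star. -/
def HasStarD {α : Type*} (d : α → α → ℝ) (A η : ℝ) (n : ℕ) : Prop :=
  ∃ ρ : ℝ, 0 < ρ ∧ ∃ x : Fin (n + 1) → α,
    (∀ i j : Fin (n + 1), i ≠ 0 → j ≠ 0 → i ≠ j →
      (A - η) * ρ ≤ d (x i) (x j) ∧ d (x i) (x j) ≤ A * ρ) ∧
    (∀ i : Fin (n + 1), i ≠ 0 → ρ ≤ d (x 0) (x i) ∧ d (x 0) (x i) ≤ (1 + η) * ρ)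

/-- The distance function `d` is starry. -/
def StarryD {α : Type*} (d : α → α → ℝ) : Prop :=
  ∃ A η : ℝ, 1 < A ∧ 0 < η ∧ η < (A - 1) / 2 ∧
    ∀ n : ℕ, ∃ An : ℝ, A ≤ An ∧ HasStarD d An η n

/-- The distance function `d` is doubling: some `K` balls of radius `r/2` cover each ball of
radius `r`. -/
def DoublingD {α : Type*} (d : α → α → ℝ) : Prop :=
  ∃ K : ℕ, 0 < K ∧ ∀ (x : α) (r : ℝ), 0 < r →
    ∃ c : Finset α, c.card ≤ K ∧ ∀ y : α, d x y ≤ r → ∃ z ∈ c, d z y ≤ r / 2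

/-- The distance function `d` satisfies the Assouad covering condition with exponent `a`. -/
def FiniteAssouadWithD {α : Type*} (d : α → α → ℝ) (a : ℝ) : Prop :=
  ∃ C : ℝ, 0 < C ∧ ∀ (x : α) (R r : ℝ), 0 < r → r < R → R < 1 →
    ∃ 𝒰 : Finset (Set α),
      (∀ U ∈ 𝒰, ∀ p ∈ U, ∀ q ∈ U, d p q ≤ r) ∧
      ({y : α | d x y ≤ R} ⊆ ⋃ U ∈ 𝒰, U) ∧
      (𝒰.card : ℝ) ≤ C * (R / r) ^ a

open Set

lemma icc_subset_union (f : ℝ → ℝ) (a b c : ℝ) :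
    Icc (min a c) (max a c) ⊆ Icc (min a b) (max a b) ∪ Icc (min b c) (max b c) := by
  intro x hx
  simp only [Set.mem_Icc, Set.mem_union] at *
  rcases le_total x b with h | h
  · rcases min_le_iff.mp hx.1 with h1 | h1
    · exact Or.inl ⟨le_trans (min_le_left a b) h1, le_trans h (le_max_right a b)⟩
    · exact Or.inr ⟨le_trans (min_le_right b c) h1, le_trans h (le_max_left b c)⟩
  · rcases le_max_iff.mp hx.2 with h1 | h1
    · exact Or.inl ⟨le_trans (min_le_right a b) h, le_trans h1 (le_max_left a b)⟩
    · exact Or.inr ⟨le_trans (min_le_left b c) h, le_trans h1 (le_max_right b c)⟩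

lemma treeDist_symm (f : ℝ → ℝ) (a b : ℝ) : treeDist f a b = treeDist f b a := by
  simp [treeDist, min_comm, max_comm]; ring
lemma treeDist_triangle (f : ℝ → ℝ) (hnn : ∀ u ∈ Icc (0:ℝ) 1, 0 ≤ f u)
    {a b c : ℝ} (ha : a ∈ Icc (0:ℝ) 1) (hb : b ∈ Icc (0:ℝ) 1) (hc : c ∈ Icc (0:ℝ) 1) :
    treeDist f a c ≤ treeDist f a b + treeDist f b c := by
  have bdd : ∀ x y : ℝ, x ∈ Icc (0:ℝ) 1 → y ∈ Icc (0:ℝ) 1 →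
      BddBelow (f '' Icc (min x y) (max x y)) := by
    rintro x y hx hy
    refine ⟨0, ?_⟩
    rintro _ ⟨u, hu, rfl⟩
    exact hnn u ⟨le_trans (le_min hx.1 hy.1) hu.1, le_trans hu.2 (max_le hx.2 hy.2)⟩
  have ne : ∀ x y : ℝ, (f '' Icc (min x y) (max x y)).Nonempty :=
    fun x y => (Set.nonempty_Icc.2 (min_le_max)).image f
  set Iab := sInf (f '' Icc (min a b) (max a b)) with hIab
  set Ibc := sInf (f '' Icc (min b c) (max b c)) with hIbc
  set Iac := sInf (f '' Icc (min a c) (max a c)) with hIac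
  have key : min Iab Ibc ≤ Iac := by
    rw [hIab, hIbc, ← csInf_union (bdd a b ha hb) (ne a b) (bdd b c hb hc) (ne b c),
      ← Set.image_union]
    exact csInf_le_csInf (((bdd a b ha hb).union (bdd b c hb hc)).mono
      (Set.image_union f _ _ ▸ le_refl _)) (ne a c)
      (Set.image_mono (f := f) (icc_subset_union f a b c) |>.trans
        (Set.image_union f _ _ ▸ subset_rfl))
  have h1 : Iab ≤ f b := csInf_le (bdd a b ha hb) ⟨b, ⟨min_le_right _ _, le_max_right _ _⟩, rfl⟩
  have h2 : Ibc ≤ f b := csInf_le (bdd b c hb hc) ⟨b, ⟨min_le_left _ _, le_max_left _ _⟩, rfl⟩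
  unfold treeDist
  rw [← hIab, ← hIbc, ← hIac]
  rcases le_total Iab Ibc with h | h
  · have : Iab ≤ Iac := le_trans (by simp [min_eq_left h]) key
    linarith
  · have : Ibc ≤ Iac := le_trans (by simp [min_eq_right h]) key
    linarith
lemma zigzag_valley (m k : ℕ) (hm : 2 ≤ m) (hk1 : 1 ≤ k) (hk : k < m) :
    zigzag m ((k:ℝ)/m) = 1/2 := by
  have hm0 : (0:ℝ) < m := by
    have : 0 < m := by omega
    exact_mod_cast this
  have hm2 : (0:ℝ) < 2*m := by linarith
  have hk1' : (1:ℝ) ≤ k := by exact_mod_cast hk1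
  have hk' : (k:ℝ) < m := by exact_mod_cast hk
  have hk'' : (k:ℝ) + 1 ≤ m := by exact_mod_cast hk
  unfold zigzag
  rw [if_neg (by rw [not_lt, div_le_div_iff₀ hm2 hm0]; nlinarith),
    if_neg (by rw [not_le, div_lt_div_iff₀ hm0 hm2]; nlinarith [hk''])]
  have hfl : 2 * (m:ℝ) * ((k:ℝ)/m) = ((2*k : ℤ) : ℝ) := by push_cast; field_simp; try ring
  rw [hfl, Int.floor_intCast]
  rw [if_neg (by omega)]
  have h2 : ((2*(k:ℤ))/2 - 1 : ℤ) = (k:ℤ) - 1 := by omega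
  rw [h2]
  push_cast
  field_simp
  try ring

lemma zigzag_peak (m i : ℕ) (hi1 : 1 ≤ i) (hi : i + 1 < m) :
    zigzag m ((2*(i:ℝ)+1)/(2*m)) = 1 := by
  have hm0 : (0:ℝ) < m := by
    have : 0 < m := by omega
    exact_mod_cast this
  have hm2 : (0:ℝ) < 2*m := by linarith
  have hi1' : (1:ℝ) ≤ i := by exact_mod_cast hi1
  have hi' : (i:ℝ) + 1 < m := by exact_mod_cast hi
  unfold zigzag
  rw [if_neg (by rw [not_lt, div_le_div_iff₀ hm2 hm2]; nlinarith),
    if_neg (by rw [not_le, div_lt_div_iff₀ hm2 hm2]; nlinarith)]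
  have hfl : 2 * (m:ℝ) * ((2*(i:ℝ)+1)/(2*m)) = ((2*i+1 : ℤ) : ℝ) := by
    push_cast; field_simp; try ring
  rw [hfl, Int.floor_intCast]
  rw [if_pos (by omega)]
  have h2 : ((2*(i:ℤ)+1 - 1)/2 : ℤ) = (i:ℤ) := by omega
  rw [h2]
  push_cast
  field_simp
  try ring

lemma zigzag_ge (m : ℕ) (hm : 1 ≤ m) {u : ℝ} (h1 : 1/(2*m) ≤ u)
    (h2 : u ≤ (2*m-1)/(2*m)) : 1/2 ≤ zigzag m u := by
  have hm0 : (0:ℝ) < m := by exact_mod_cast hm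
  have hm0' : (0:ℝ) < 2*m := by linarith
  unfold zigzag
  rw [if_neg (not_lt.2 h1)]
  by_cases hb : (2*(m:ℝ)-1)/(2*m) ≤ u
  · rw [if_pos hb]
    have h2' : u * (2*m) ≤ 2*(m:ℝ)-1 := (le_div_iff₀ hm0').mp h2
    nlinarith
  · rw [if_neg hb]
    set j := ⌊2*(m:ℝ)*u⌋ with hj
    have hfl : (j:ℝ) ≤ 2*m*u := Int.floor_le _
    have hfu : 2*(m:ℝ)*u < j + 1 := Int.lt_floor_add_one _
    by_cases hp : j % 2 = 1
    · rw [if_pos hp]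
      obtain ⟨k, hk⟩ : ∃ k : ℤ, j = 2*k+1 := ⟨(j-1)/2, by omega⟩
      have h3 : ((j - 1)/2 : ℤ) = k := by omega
      rw [h3]
      have h4 : 2*(m:ℝ)*u < 2*(k:ℝ)+1+1 := by
        rw [hk] at hfu; push_cast at hfu; linarith
      push_cast
      linarith
    · rw [if_neg hp]
      obtain ⟨k, hk⟩ : ∃ k : ℤ, j = 2*k := ⟨j/2, by omega⟩
      have h3 : (j/2 - 1 : ℤ) = k - 1 := by omega
      rw [h3]
      have h4 : 2*(k:ℝ) ≤ 2*m*u := by rw [hk] at hfl; push_cast at hfl; linarith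
      push_cast
      linarith
lemma star_points (f : ℝ → ℝ)
    (happrox : ∀ N : ℕ, ∃ n : ℕ, N ≤ n ∧ ∃ s t : ℝ, 0 ≤ s ∧ s < t ∧ t ≤ 1 ∧
      ∀ u ∈ Icc (0 : ℝ) 1,
        |f (s + (t - s) * u) - f s - Real.sqrt (t - s) * zigzag n u| <
          Real.sqrt (t - s) * (2 : ℝ) ^ (1 - (n : ℤ)))
    (n : ℕ) :
    ∃ ρ : ℝ, 0 < ρ ∧ ρ ≤ 1/2 ∧ ∃ An : ℝ, 2 ≤ An ∧
    ∃ x : Fin (n+1) → Icc (0:ℝ) 1,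
      (∀ i j : Fin (n+1), i ≠ 0 → j ≠ 0 → i ≠ j →
        (An - 1/10) * ρ ≤ dIcc f (x i) (x j) ∧ dIcc f (x i) (x j) ≤ An * ρ) ∧
      (∀ i : Fin (n+1), i ≠ 0 →
        ρ ≤ dIcc f (x 0) (x i) ∧ dIcc f (x 0) (x i) ≤ (1 + 1/10) * ρ) := by
  obtain ⟨m, hmN, s, t, hs0, hst, ht1, happ⟩ := happrox (max (n+2) 10)
  have hm10 : 10 ≤ m := le_trans (le_max_right _ _) hmN
  have hmn : n + 2 ≤ m := le_trans (le_max_left _ _) hmN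
  have hts : 0 < t - s := by linarith
  set σ := Real.sqrt (t - s) with hσdef
  have hσ : 0 < σ := Real.sqrt_pos.2 hts
  have hσ1 : σ ≤ 1 := by
    rw [hσdef, show (1:ℝ) = Real.sqrt 1 from (Real.sqrt_one).symm]
    exact Real.sqrt_le_sqrt (by linarith)
  set ε := (2:ℝ) ^ (1 - (m:ℤ)) with hεdef
  have hε : 0 < ε := by positivity
  have hε' : ε ≤ 1/512 := by
    rw [hεdef, show (1:ℝ)/512 = (2:ℝ)^(-9 : ℤ) by norm_num]
    exact zpow_le_zpow_right₀ one_le_two (by omega)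
  have hm0 : (0:ℝ) < m := by
    have : 0 < m := by omega
    exact_mod_cast this
  have hm2 : (0:ℝ) < 2*m := by linarith
  have hn' : (n:ℝ) + 2 ≤ m := by exact_mod_cast hmn
  have hεσ : σ*ε ≤ σ*(1/512) := mul_le_mul_of_nonneg_left hε' hσ.le
  have honem : (1:ℝ)/(m:ℝ) = 2/(2*m) := by rw [div_eq_div_iff hm0.ne' hm2.ne']; ring
  -- pointwise approximation on the working range
  have hpt : ∀ u : ℝ, 1/(2*(m:ℝ)) ≤ u → u ≤ (2*(m:ℝ)-1)/(2*m) →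
      |f (s + (t-s)*u) - f s - σ * zigzag m u| < σ * ε := by
    intro u h1 h2
    apply happ
    constructor
    · have : (0:ℝ) < 1/(2*m) := by positivity
      linarith
    · have : (2*(m:ℝ)-1)/(2*m) ≤ 1 := by rw [div_le_one hm2]; linarith
      linarith
  have hlow : ∀ u : ℝ, 1/(2*(m:ℝ)) ≤ u → u ≤ (2*(m:ℝ)-1)/(2*m) →
      f s + σ/2 - σ*ε ≤ f (s + (t-s)*u) := by
    intro u h1 h2
    have h3 := (abs_lt.mp (hpt u h1 h2)).1
    have h4 := zigzag_ge m (by omega) h1 h2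
    have h5 : σ * (1/2) ≤ σ * zigzag m u := mul_le_mul_of_nonneg_left h4 hσ.le
    linarith
  -- infimum estimate over a subinterval containing a valley
  have hinf : ∀ a b v : ℝ, 1/(2*(m:ℝ)) ≤ a → a ≤ v → v ≤ b → b ≤ (2*(m:ℝ)-1)/(2*m) →
      zigzag m v = 1/2 →
      f s + σ/2 - σ*ε ≤ sInf (f '' Icc (s+(t-s)*a) (s+(t-s)*b)) ∧
      sInf (f '' Icc (s+(t-s)*a) (s+(t-s)*b)) ≤ f s + σ/2 + σ*ε := by
    intro a b v ha hav hvb hb hv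
    have hab : a ≤ b := le_trans hav hvb
    have hxy : s+(t-s)*a ≤ s+(t-s)*b :=
      add_le_add_right (mul_le_mul_of_nonneg_left hab hts.le) s
    have hne : (f '' Icc (s+(t-s)*a) (s+(t-s)*b)).Nonempty :=
      (Set.nonempty_Icc.2 hxy).image f
    have hlb : ∀ y ∈ f '' Icc (s+(t-s)*a) (s+(t-s)*b), f s + σ/2 - σ*ε ≤ y := by
      rintro _ ⟨w, hw, rfl⟩
      have hwu : s + (t-s)*((w - s)/(t - s)) = w := by field_simp; ring
      have hua : a ≤ (w - s)/(t - s) := by rw [le_div_iff₀ hts]; linarith [hw.1]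
      have hub : (w - s)/(t - s) ≤ b := by rw [div_le_iff₀ hts]; linarith [hw.2]
      have := hlow _ (le_trans ha hua) (le_trans hub hb)
      rwa [hwu] at this
    refine ⟨le_csInf hne hlb, ?_⟩
    have hmem : s + (t-s)*v ∈ Icc (s+(t-s)*a) (s+(t-s)*b) :=
      ⟨add_le_add_right (mul_le_mul_of_nonneg_left hav hts.le) s,
       add_le_add_right (mul_le_mul_of_nonneg_left hvb hts.le) s⟩
    have h1 : sInf (f '' Icc (s+(t-s)*a) (s+(t-s)*b)) ≤ f (s+(t-s)*v) :=
      csInf_le ⟨f s + σ/2 - σ*ε, hlb⟩ ⟨_, hmem, rfl⟩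
    have h2 := hpt v (le_trans ha hav) (le_trans hvb hb)
    rw [hv] at h2
    have h3 := (abs_lt.mp h2).2
    linarith
  -- leaf-leaf distances
  have hleafd : ∀ k l : ℕ, 1 ≤ k → k < l → l ≤ n →
      σ - 4*(σ*ε) ≤ treeDist f (s+(t-s)*((2*(k:ℝ)+1)/(2*m))) (s+(t-s)*((2*(l:ℝ)+1)/(2*m))) ∧
      treeDist f (s+(t-s)*((2*(k:ℝ)+1)/(2*m))) (s+(t-s)*((2*(l:ℝ)+1)/(2*m))) ≤ σ + 4*(σ*ε) := by
    intro k l hk1 hkl hln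
    have hkl' : (k:ℝ) < l := by exact_mod_cast hkl
    have hkl'' : (k:ℝ)+1 ≤ l := by exact_mod_cast hkl
    have hln' : (l:ℝ) ≤ n := by exact_mod_cast hln
    have hk1' : (1:ℝ) ≤ k := by exact_mod_cast hk1
    set a := (2*(k:ℝ)+1)/(2*(m:ℝ)) with hadef
    set b := (2*(l:ℝ)+1)/(2*(m:ℝ)) with hbdef
    set v := ((k:ℝ)+1)/(m:ℝ) with hvdef
    have hv2 : v = (2*(k:ℝ)+2)/(2*(m:ℝ)) := by
      rw [hvdef, div_eq_div_iff hm0.ne' hm2.ne']; ring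
    have ha1 : 1/(2*(m:ℝ)) ≤ a := by
      rw [hadef]; exact (div_le_div_iff_of_pos_right hm2).mpr (by linarith)
    have hb2 : b ≤ (2*(m:ℝ)-1)/(2*m) := by
      rw [hbdef]; exact (div_le_div_iff_of_pos_right hm2).mpr (by linarith)
    have hab : a ≤ b := by
      rw [hadef, hbdef]; exact (div_le_div_iff_of_pos_right hm2).mpr (by linarith)
    have hav : a ≤ v := by
      rw [hadef, hv2]; exact (div_le_div_iff_of_pos_right hm2).mpr (by linarith)
    have hvb : v ≤ b := by
      rw [hv2, hbdef]; exact (div_le_div_iff_of_pos_right hm2).mpr (by linarith)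
    have hV : zigzag m v = 1/2 := by
      have h := zigzag_valley m (k+1) (by omega) (by omega) (by omega)
      have hc : (((k+1:ℕ)):ℝ) = (k:ℝ)+1 := by push_cast; ring
      rw [hc] at h
      rw [hvdef]; exact h
    obtain ⟨hi1, hi2⟩ := hinf a b v ha1 hav hvb hb2 hV
    have hfa := hpt a ha1 (le_trans hab hb2)
    have hfb := hpt b (le_trans ha1 hab) hb2
    have hZa : zigzag m a = 1 := zigzag_peak m k hk1 (by omega)
    have hZb : zigzag m b = 1 := zigzag_peak m l (by omega) (by omega)
    rw [hZa, mul_one] at hfa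
    rw [hZb, mul_one] at hfb
    have hxy : s+(t-s)*a ≤ s+(t-s)*b :=
      add_le_add_right (mul_le_mul_of_nonneg_left hab hts.le) s
    unfold treeDist
    rw [min_eq_left hxy, max_eq_right hxy]
    obtain ⟨l1, l2⟩ := abs_lt.mp hfa
    obtain ⟨l3, l4⟩ := abs_lt.mp hfb
    constructor <;> linarith
  -- center-leaf distances
  have hcentd : ∀ k : ℕ, 1 ≤ k → k ≤ n →
      σ/2 - 4*(σ*ε) ≤ treeDist f (s+(t-s)*(1/(m:ℝ))) (s+(t-s)*((2*(k:ℝ)+1)/(2*m))) ∧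
      treeDist f (s+(t-s)*(1/(m:ℝ))) (s+(t-s)*((2*(k:ℝ)+1)/(2*m))) ≤ σ/2 + 4*(σ*ε) := by
    intro k hk1 hkn
    have hk1' : (1:ℝ) ≤ k := by exact_mod_cast hk1
    have hkn' : (k:ℝ) ≤ n := by exact_mod_cast hkn
    set a := 1/(m:ℝ) with hadef
    set b := (2*(k:ℝ)+1)/(2*(m:ℝ)) with hbdef
    have ha2 : a = 2/(2*(m:ℝ)) := by rw [hadef]; exact honem
    have ha1 : 1/(2*(m:ℝ)) ≤ a := by
      rw [ha2]; exact (div_le_div_iff_of_pos_right hm2).mpr (by linarith)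
    have hb2 : b ≤ (2*(m:ℝ)-1)/(2*m) := by
      rw [hbdef]; exact (div_le_div_iff_of_pos_right hm2).mpr (by linarith)
    have hab : a ≤ b := by
      rw [ha2, hbdef]; exact (div_le_div_iff_of_pos_right hm2).mpr (by linarith)
    have hV : zigzag m a = 1/2 := by
      have h := zigzag_valley m 1 (by omega) le_rfl (by omega)
      have hc : (((1:ℕ)):ℝ) = (1:ℝ) := by norm_num
      rw [hc] at h
      rw [hadef]; exact h
    obtain ⟨hi1, hi2⟩ := hinf a b a ha1 le_rfl hab hb2 hV
    have hfa := hpt a ha1 (le_trans hab hb2)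
    have hfb := hpt b (le_trans ha1 hab) hb2
    rw [hV] at hfa
    have hZb : zigzag m b = 1 := zigzag_peak m k hk1 (by omega)
    rw [hZb, mul_one] at hfb
    have hxy : s+(t-s)*a ≤ s+(t-s)*b :=
      add_le_add_right (mul_le_mul_of_nonneg_left hab hts.le) s
    unfold treeDist
    rw [min_eq_left hxy, max_eq_right hxy]
    obtain ⟨l1, l2⟩ := abs_lt.mp hfa
    obtain ⟨l3, l4⟩ := abs_lt.mp hfb
    constructor <;> linarith
  -- membership of the constructed points in [0,1]
  have hIcc : ∀ u : ℝ, 1/(2*(m:ℝ)) ≤ u → u ≤ (2*(m:ℝ)-1)/(2*m) →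
      s + (t-s)*u ∈ Icc (0:ℝ) 1 := by
    intro u h1 h2
    have hu0 : 0 < u := lt_of_lt_of_le (by positivity) h1
    have hu1 : u ≤ 1 := le_trans h2 (by rw [div_le_one hm2]; linarith)
    have p1 := mul_pos hts hu0
    have p2 := mul_le_mul_of_nonneg_left hu1 hts.le
    constructor
    · linarith
    · linarith [p2, mul_one (t-s)]
  set uu : Fin (n+1) → ℝ :=
    fun i => if i = 0 then 1/(m:ℝ) else (2*(i.val:ℝ)+1)/(2*(m:ℝ)) with huudef
  have huu : ∀ i : Fin (n+1), 1/(2*(m:ℝ)) ≤ uu i ∧ uu i ≤ (2*(m:ℝ)-1)/(2*m) := by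
    intro i
    simp only [huudef]
    by_cases h : i = 0
    · rw [if_pos h, honem]
      exact ⟨(div_le_div_iff_of_pos_right hm2).mpr (by linarith),
        (div_le_div_iff_of_pos_right hm2).mpr (by linarith)⟩
    · rw [if_neg h]
      have hiv : 1 ≤ i.val := Nat.one_le_iff_ne_zero.2 (fun hc => h (Fin.ext hc))
      have hin : i.val ≤ n := Nat.lt_succ_iff.mp i.isLt
      have h1 : (1:ℝ) ≤ i.val := by exact_mod_cast hiv
      have h2 : (i.val:ℝ) ≤ n := by exact_mod_cast hin
      exact ⟨(div_le_div_iff_of_pos_right hm2).mpr (by linarith),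
        (div_le_div_iff_of_pos_right hm2).mpr (by linarith)⟩
  have hc0 : (1:ℝ)/2-4*ε ≠ 0 := by intro hc; linarith
  have hAρ : (1+4*ε)/(1/2-4*ε) * (σ*(1/2-4*ε)) = σ*(1+4*ε) := by
    rw [mul_comm σ, ← mul_assoc, div_mul_cancel₀ _ hc0]
    ring
  refine ⟨σ*(1/2 - 4*ε), mul_pos hσ (by linarith), 
    le_trans (mul_le_mul_of_nonneg_right hσ1 (by linarith)) (by linarith),
    (1+4*ε)/(1/2-4*ε), ?_, ?_⟩
  · rw [le_div_iff₀ (by linarith)]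
    linarith
  refine ⟨fun i => ⟨s + (t-s)*(uu i), hIcc _ (huu i).1 (huu i).2⟩, ?_, ?_⟩
  · intro i j hi hj hij
    have hiv : 1 ≤ i.val := Nat.one_le_iff_ne_zero.2 (fun hc => hi (Fin.ext hc))
    have hjv : 1 ≤ j.val := Nat.one_le_iff_ne_zero.2 (fun hc => hj (Fin.ext hc))
    have hin : i.val ≤ n := Nat.lt_succ_iff.mp i.isLt
    have hjn : j.val ≤ n := Nat.lt_succ_iff.mp j.isLt
    have hui : uu i = (2*(i.val:ℝ)+1)/(2*(m:ℝ)) := by simp only [huudef]; rw [if_neg hi]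
    have huj : uu j = (2*(j.val:ℝ)+1)/(2*(m:ℝ)) := by simp only [huudef]; rw [if_neg hj]
    have hd : σ - 4*(σ*ε) ≤ treeDist f (s+(t-s)*(uu i)) (s+(t-s)*(uu j)) ∧
        treeDist f (s+(t-s)*(uu i)) (s+(t-s)*(uu j)) ≤ σ + 4*(σ*ε) := by
      rcases Nat.lt_or_ge i.val j.val with h | h
      · rw [hui, huj]; exact hleafd i.val j.val hiv h hjn
      · have hlt : j.val < i.val := by
          rcases Nat.lt_or_ge j.val i.val with h' | h'
          · exact h'
          · exact absurd (Fin.ext (le_antisymm h' h)) hij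
        rw [hui, huj, treeDist_symm]
        exact hleafd j.val i.val hjv hlt hin
    constructor
    · show (_:ℝ) ≤ treeDist f (s+(t-s)*(uu i)) (s+(t-s)*(uu j))
      linarith [hd.1, hAρ, hεσ, hσ.le]
    · show treeDist f (s+(t-s)*(uu i)) (s+(t-s)*(uu j)) ≤ _
      linarith [hd.2, hAρ, hεσ, hσ.le]
  · intro i hi
    have hiv : 1 ≤ i.val := Nat.one_le_iff_ne_zero.2 (fun hc => hi (Fin.ext hc))
    have hin : i.val ≤ n := Nat.lt_succ_iff.mp i.isLt
    have hu0 : uu 0 = 1/(m:ℝ) := by simp [huudef]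
    have hui : uu i = (2*(i.val:ℝ)+1)/(2*(m:ℝ)) := by simp only [huudef]; rw [if_neg hi]
    have hd := hcentd i.val hiv hin
    rw [← hu0, ← hui] at hd
    constructor
    · show (_:ℝ) ≤ treeDist f (s+(t-s)*(uu 0)) (s+(t-s)*(uu i))
      linarith [hd.1, hεσ]
    · show treeDist f (s+(t-s)*(uu 0)) (s+(t-s)*(uu i)) ≤ _
      linarith [hd.2, hεσ]
/-- If a continuous excursion function `f` contains, for infinitely many
`n`, an interval on which it approximates the rescaled zig-zag `F_n` within
`√(t−s)·2^{1−n}`, then the continuum tree `T_f = ([0,1]/≈_f, d_f)` is starry; in particular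
it has infinite Assouad dimension and is not doubling. -/
theorem continuum_tree_starry_of_zigzag_approx (f : ℝ → ℝ)
    (hcont : ContinuousOn f (Icc 0 1))
    (hf0 : f 0 = 0) (hf1 : f 1 = 0)
    (hpos : ∀ u ∈ Ioo (0 : ℝ) 1, 0 < f u)
    (hnonneg : ∀ u ∈ Icc (0 : ℝ) 1, 0 ≤ f u)
    (happrox : ∀ N : ℕ, ∃ n : ℕ, N ≤ n ∧ ∃ s t : ℝ, 0 ≤ s ∧ s < t ∧ t ≤ 1 ∧
      ∀ u ∈ Icc (0 : ℝ) 1,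
        |f (s + (t - s) * u) - f s - Real.sqrt (t - s) * zigzag n u| <
          Real.sqrt (t - s) * (2 : ℝ) ^ (1 - (n : ℤ))) :
    StarryD (dIcc f) ∧
    (¬ ∃ a : ℝ, 0 ≤ a ∧ FiniteAssouadWithD (dIcc f) a) ∧
    ¬ DoublingD (dIcc f) := by
  have star := star_points f happrox
  have symm : ∀ a b : Icc (0:ℝ) 1, dIcc f a b = dIcc f b a :=
    fun a b => treeDist_symm f a b
  have tri : ∀ a b c : Icc (0:ℝ) 1, dIcc f a c ≤ dIcc f a b + dIcc f b c :=
    fun a b c => treeDist_triangle f hnonneg a.2 b.2 c.2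
  refine ⟨?_, ?_, ?_⟩
  · refine ⟨2, 1/10, by norm_num, by norm_num, by norm_num, fun n => ?_⟩
    obtain ⟨ρ, hρ, hρh, An, hAn, x, hl, hc⟩ := star n
    exact ⟨An, hAn, ρ, hρ, x, hl, hc⟩
  · rintro ⟨a, ha, C, hC, hcov⟩
    obtain ⟨n, hn⟩ := exists_nat_gt (C * 2^a)
    obtain ⟨ρ, hρ, hρh, An, hAn, x, hl, hc⟩ := star n
    obtain ⟨𝒰, hU1, hU2, hU3⟩ := hcov (x 0) ((11/10)*ρ) ((11/20)*ρ)
      (by linarith) (by linarith) (by linarith)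
    have hx : ∀ i : Fin (n+1), i ≠ 0 → ∃ U ∈ 𝒰, x i ∈ U := by
      intro i hi
      have hmem : x i ∈ {y | dIcc f (x 0) y ≤ (11/10)*ρ} := by
        have h2 := (hc i hi).2
        simp only [Set.mem_setOf_eq]
        linarith
      have := hU2 hmem
      simpa using this
    choose U hU hxU using hx
    have hinj : Function.Injective
        (fun k : Fin n => (⟨U k.succ (Fin.succ_ne_zero k), hU _ _⟩ : {v // v ∈ 𝒰})) := by
      intro k k' he
      by_contra hne
      have hkk : (k.succ : Fin (n+1)) ≠ k'.succ :=
        fun hcc => hne (Fin.succ_injective _ hcc)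
      have hsame : U k.succ (Fin.succ_ne_zero k) = U k'.succ (Fin.succ_ne_zero k') :=
        congrArg Subtype.val he
      have h1 := hxU k.succ (Fin.succ_ne_zero k)
      have h2 := hxU k'.succ (Fin.succ_ne_zero k')
      rw [hsame] at h1
      have hd := hU1 _ (hU k'.succ (Fin.succ_ne_zero k')) _ h1 _ h2
      have hsep := (hl k.succ k'.succ (Fin.succ_ne_zero k) (Fin.succ_ne_zero k') hkk).1
      nlinarith [mul_nonneg (by linarith : (0:ℝ) ≤ An - 2) hρ.le]
    have hcard : (n : ℕ) ≤ 𝒰.card := by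
      have := Fintype.card_le_of_injective _ hinj
      simpa [Fintype.card_coe] using this
    have h2a : ((11/10)*ρ)/((11/20)*ρ) = 2 := by
      rw [div_eq_iff (by positivity)]; ring
    rw [h2a] at hU3
    have hfin : (n:ℝ) ≤ C * 2^a := le_trans (by exact_mod_cast hcard) hU3
    linarith
  · rintro ⟨K, hK, hdbl⟩
    obtain ⟨ρ, hρ, hρh, An, hAn, x, hl, hc⟩ := star (K+1)
    obtain ⟨c, hcard, hcover⟩ := hdbl (x 0) ((11/10)*ρ) (by linarith)
    have hx : ∀ i : Fin (K+2), i ≠ 0 → ∃ z ∈ c, dIcc f z (x i) ≤ ((11/10)*ρ)/2 := by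
      intro i hi
      exact hcover (x i) (by linarith [(hc i hi).2])
    choose z hz hzd using hx
    have hinj : Function.Injective
        (fun k : Fin (K+1) => (⟨z k.succ (Fin.succ_ne_zero k), hz _ _⟩ : {v // v ∈ c})) := by
      intro k k' he
      by_contra hne
      have hkk : (k.succ : Fin (K+2)) ≠ k'.succ :=
        fun hcc => hne (Fin.succ_injective _ hcc)
      have hsame : z k.succ (Fin.succ_ne_zero k) = z k'.succ (Fin.succ_ne_zero k') :=
        congrArg Subtype.val he
      have h1 := hzd k.succ (Fin.succ_ne_zero k)
      have h2 := hzd k'.succ (Fin.succ_ne_zero k')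
      rw [hsame] at h1
      have htri := tri (x k.succ) (z k'.succ (Fin.succ_ne_zero k')) (x k'.succ)
      rw [symm (x k.succ) (z k'.succ (Fin.succ_ne_zero k'))] at htri
      have hsep := (hl k.succ k'.succ (Fin.succ_ne_zero k) (Fin.succ_ne_zero k') hkk).1
      nlinarith [mul_nonneg (by linarith : (0:ℝ) ≤ An - 2) hρ.le]
    have hcard2 : K + 1 ≤ c.card := by
      have := Fintype.card_le_of_injective _ hinj
      simpa [Fintype.card_coe] using this
    omega
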